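/- Let n ≥ 2 be an integer, A an LM_n-algebra, and (X(A),{f_1^A,…,f_{n−1}^A}) its dual l_nP-space of prime filters. Then: (i) the lattice of all closed modal subsets of X(A) is isomorphic to the dual of the lattice of all LM_n-congruences on A, via the map Y ↦ Θ_M(Y) = {(a,b) ∈ A×A : σ_A(a) ∩ Y = σ_A(b) ∩ Y}; (ii) the lattice of all open modal subsets of X(A) is isomorphic to the lattice of all LM_n-congruences on A, via the map G ↦ Θ_OM(G) = {(a,b) ∈ A×A : σ_A(a) △ σ_A(b) ⊆ G}. -/

import Mathlib

/-- An LM_θ-algebra over a linearly ordered index set `I`: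
a bounded distributive lattice with operations `phi i` and `phibar i`. -/
structure LMAlg (I A : Type*) [LinearOrder I] [DistribLattice A] [BoundedOrder A] where
  phi : I → A → A
  phibar : I → A → A
  phi_sup : ∀ i x y, phi i (x ⊔ y) = phi i x ⊔ phi i y
  phi_inf : ∀ i x y, phi i (x ⊓ y) = phi i x ⊓ phi i y
  phi_bot : ∀ i, phi i ⊥ = ⊥
  phi_top : ∀ i, phi i ⊤ = ⊤
  sup_phibar : ∀ i x, phi i x ⊔ phibar i x = ⊤
  inf_phibar : ∀ i x, phi i x ⊓ phibar i x = ⊥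
  phi_phi : ∀ i j x, phi i (phi j x) = phi j x
  phi_mono : ∀ ⦃i j : I⦄, i ≤ j → ∀ x, phi i x ≤ phi j x
  determined : ∀ x y, (∀ i, phi i x = phi i y) → x = y

/-- A prime filter of a bounded distributive lattice. -/
structure PrimeFilter (A : Type*) [DistribLattice A] [BoundedOrder A] where
  carrier : Set A
  top_mem : ⊤ ∈ carrier
  bot_notMem : ⊥ ∉ carrier
  mem_of_le : ∀ {a b : A}, a ∈ carrier → a ≤ b → b ∈ carrier
  inf_mem : ∀ {a b : A}, a ∈ carrier → b ∈ carrier → a ⊓ b ∈ carrier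
  prime : ∀ {a b : A}, a ⊔ b ∈ carrier → a ∈ carrier ∨ b ∈ carrier

variable {I A : Type*} [LinearOrder I] [DistribLattice A] [BoundedOrder A]

/-- Prime filters ordered by inclusion. -/
instance : PartialOrder (PrimeFilter A) where
  le P Q := P.carrier ⊆ Q.carrier
  le_refl _ _ hx := hx
  le_trans _ _ _ h1 h2 _ hx := h2 (h1 hx)
  le_antisymm P Q h1 h2 := by
    cases P; cases Q
    simp only [PrimeFilter.mk.injEq]
    exact subset_antisymm h1 h2

/-- The map `σ_A`. -/
def sigmaA (a : A) : Set (PrimeFilter A) := {P | a ∈ P.carrier}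

/-- The Priestley topology on the set of prime filters, with sub-basis the sets
`σ_A a` and their complements. -/
instance : TopologicalSpace (PrimeFilter A) :=
  TopologicalSpace.generateFrom
    (Set.range (sigmaA (A := A)) ∪ Set.range (fun a : A => (sigmaA a)ᶜ))

/-- The map `f_i^A (P) = φ_i⁻¹(P)` on prime filters. -/
def LMAlg.fA (L : LMAlg I A) (i : I) (P : PrimeFilter A) : PrimeFilter A where
  carrier := L.phi i ⁻¹' P.carrier
  top_mem := by simp only [Set.mem_preimage, L.phi_top]; exact P.top_mem
  bot_notMem := by simp only [Set.mem_preimage, L.phi_bot]; exact P.bot_notMem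
  mem_of_le := by
    intro a b ha hab
    have h1 : L.phi i b = L.phi i a ⊔ L.phi i b := by
      rw [← L.phi_sup, sup_eq_right.mpr hab]
    exact P.mem_of_le ha (le_sup_left.trans_eq h1.symm)
  inf_mem := by
    intro a b ha hb
    simp only [Set.mem_preimage, L.phi_inf]
    exact P.inf_mem ha hb
  prime := by
    intro a b h
    simp only [Set.mem_preimage, L.phi_sup] at h
    exact P.prime h

/-- An LM_θ-congruence: a bounded-lattice congruence compatible with all `phi i`, `phibar i`. -/
structure IsLMCongr (L : LMAlg I A) (r : A → A → Prop) : Prop where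
  refl : ∀ x, r x x
  symm : ∀ {x y}, r x y → r y x
  trans : ∀ {x y z}, r x y → r y z → r x z
  sup_congr : ∀ {x y u v}, r x y → r u v → r (x ⊔ u) (y ⊔ v)
  inf_congr : ∀ {x y u v}, r x y → r u v → r (x ⊓ u) (y ⊓ v)
  phi_congr : ∀ (i : I) {x y}, r x y → r (L.phi i x) (L.phi i y)
  phibar_congr : ∀ (i : I) {x y}, r x y → r (L.phibar i x) (L.phibar i y)

/-- A θ-congruence: a lattice congruence `r` with `r x y ↔ ∀ i, r (φ_i x) (φ_i y)`. -/
structure IsThetaCongr (L : LMAlg I A) (r : A → A → Prop) : Prop where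
  refl : ∀ x, r x x
  symm : ∀ {x y}, r x y → r y x
  trans : ∀ {x y z}, r x y → r y z → r x z
  sup_congr : ∀ {x y u v}, r x y → r u v → r (x ⊔ u) (y ⊔ v)
  inf_congr : ∀ {x y u v}, r x y → r u v → r (x ⊓ u) (y ⊓ v)
  theta : ∀ x y, r x y ↔ ∀ i : I, r (L.phi i x) (L.phi i y)

/-- `Y` is semimodal if `f i '' Y ⊆ Y` for all `i`. -/
def Semimodal {I X : Type*} (f : I → X → X) (Y : Set X) : Prop := ∀ i, f i '' Y ⊆ Y

/-- `Y` is modal if `f i ⁻¹' Y = Y` for all `i`. -/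
def Modal {I X : Type*} (f : I → X → X) (Y : Set X) : Prop := ∀ i, f i ⁻¹' Y = Y

/-- `Y` is a θ-subset if `⋃ i, f i '' Y ⊆ Y ⊆ closure (⋃ i, f i '' Y)`. -/
def ThetaSubset {I X : Type*} [TopologicalSpace X] (f : I → X → X) (Y : Set X) : Prop :=
  (⋃ i, f i '' Y) ⊆ Y ∧ Y ⊆ closure (⋃ i, f i '' Y)

/-- The relation `Θ` determined by an (open) subset `G` of the dual space:
`(a,b) ∈ Θ(G)` iff `σ_A a △ σ_A b ⊆ G`. -/
def thetaO (G : Set (PrimeFilter A)) : A → A → Prop :=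
  fun a b => symmDiff (sigmaA a) (sigmaA b) ⊆ G

/-- `r` is the principal LM_θ-congruence generated by `(a,b)`. -/
def IsPrincipalLMCongrOn (L : LMAlg I A) (r : A → A → Prop) (a b : A) : Prop :=
  IsLMCongr L r ∧ r a b ∧ ∀ s, IsLMCongr L s → s a b → ∀ x y, r x y → s x y

/-- `r` is the principal θ-congruence generated by `(a,b)`. -/
def IsPrincipalThetaCongrOn (L : LMAlg I A) (r : A → A → Prop) (a b : A) : Prop :=
  IsThetaCongr L r ∧ r a b ∧ ∀ s, IsThetaCongr L s → s a b → ∀ x y, r x y → s x y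

/-- `r` is a principal LM_θ-congruence. -/
def IsPrincipalLMCongr (L : LMAlg I A) (r : A → A → Prop) : Prop :=
  ∃ a b, IsPrincipalLMCongrOn L r a b

/-- `r` is a principal θ-congruence. -/
def IsPrincipalThetaCongr (L : LMAlg I A) (r : A → A → Prop) : Prop :=
  ∃ a b, IsPrincipalThetaCongrOn L r a b

/-- `r` is a Boolean LM_θ-congruence: a complemented element of the lattice of
LM_θ-congruences ordered by inclusion (the bottom element is equality and the
join of `r` and its complement, i.e. the least congruence containing both, is
the total relation). -/
def IsBooleanLMCongr (L : LMAlg I A) (r : A → A → Prop) : Prop :=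
  IsLMCongr L r ∧ ∃ s, IsLMCongr L s ∧
    (∀ x y, (r x y ∧ s x y) ↔ x = y) ∧
    (∀ t, IsLMCongr L t → (∀ x y, r x y → t x y) → (∀ x y, s x y → t x y) → ∀ x y, t x y)


set_option linter.unusedSectionVars false
section Auxiliary

open TopologicalSpace

lemma sigmaA_top : sigmaA (⊤ : A) = Set.univ :=
  Set.eq_univ_of_forall fun P => P.top_mem

lemma sigmaA_bot : sigmaA (⊥ : A) = (∅ : Set (PrimeFilter A)) := by
  ext P; exact iff_of_false P.bot_notMem (fun h => h)

lemma sigmaA_inf (a b : A) : sigmaA (a ⊓ b) = sigmaA a ∩ sigmaA b := by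
  ext P
  constructor
  · intro h; exact ⟨P.mem_of_le h inf_le_left, P.mem_of_le h inf_le_right⟩
  · rintro ⟨h1, h2⟩; exact P.inf_mem h1 h2

lemma sigmaA_sup (a b : A) : sigmaA (a ⊔ b) = sigmaA a ∪ sigmaA b := by
  ext P
  constructor
  · exact fun h => P.prime h
  · rintro (h | h)
    · exact P.mem_of_le h le_sup_left
    · exact P.mem_of_le h le_sup_right

lemma lat_compl_unique {u v w : A} (h1 : u ⊔ v = ⊤) (h2 : u ⊓ v = ⊥)
    (h3 : u ⊔ w = ⊤) (h4 : u ⊓ w = ⊥) : v = w := by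
  have hv : v = v ⊓ w := by
    calc v = v ⊓ (u ⊔ w) := by rw [h3, inf_top_eq]
    _ = (v ⊓ u) ⊔ (v ⊓ w) := inf_sup_left _ _ _
    _ = v ⊓ w := by rw [inf_comm v u, h2, bot_sup_eq]
  have hw : w = w ⊓ v := by
    calc w = w ⊓ (u ⊔ v) := by rw [h1, inf_top_eq]
    _ = (w ⊓ u) ⊔ (w ⊓ v) := inf_sup_left _ _ _
    _ = w ⊓ v := by rw [inf_comm w u, h4, bot_sup_eq]
  rw [hv, inf_comm]; exact hw.symm

lemma LMAlg.phi_phibar (L : LMAlg I A) (j i : I) (x : A) :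
    L.phi j (L.phibar i x) = L.phibar i x := by
  refine (lat_compl_unique (L.sup_phibar i x) (L.inf_phibar i x) ?_ ?_).symm
  · calc L.phi i x ⊔ L.phi j (L.phibar i x)
        = L.phi j (L.phi i x) ⊔ L.phi j (L.phibar i x) := by rw [L.phi_phi]
    _ = L.phi j (L.phi i x ⊔ L.phibar i x) := (L.phi_sup _ _ _).symm
    _ = ⊤ := by rw [L.sup_phibar, L.phi_top]
  · calc L.phi i x ⊓ L.phi j (L.phibar i x)
        = L.phi j (L.phi i x) ⊓ L.phi j (L.phibar i x) := by rw [L.phi_phi]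
    _ = L.phi j (L.phi i x ⊓ L.phibar i x) := (L.phi_inf _ _ _).symm
    _ = ⊥ := by rw [L.inf_phibar, L.phi_bot]

lemma LMAlg.phi_finsetInf {ι : Type*} [DecidableEq ι] (L : LMAlg I A) (j : I)
    (s : Finset ι) (f : ι → A) :
    L.phi j (s.inf f) = s.inf fun i => L.phi j (f i) := by
  induction s using Finset.induction with
  | empty => simpa using L.phi_top j
  | insert _ _ h ih => rw [Finset.inf_insert, Finset.inf_insert, L.phi_inf, ih]

lemma finsetInf_mem {P : PrimeFilter A} {ι : Type*} [DecidableEq ι] (s : Finset ι) (f : ι → A)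
    (h : ∀ j ∈ s, f j ∈ P.carrier) : s.inf f ∈ P.carrier := by
  induction s using Finset.induction with
  | empty => simpa using P.top_mem
  | @insert a s ha ih =>
    rw [Finset.inf_insert]
    exact P.inf_mem (h _ (Finset.mem_insert_self _ _))
      (ih fun j hj => h j (Finset.mem_insert_of_mem hj))

lemma phibar_mem_iff (L : LMAlg I A) (i : I) (x : A) (P : PrimeFilter A) :
    L.phibar i x ∈ P.carrier ↔ L.phi i x ∉ P.carrier := by
  constructor
  · intro h hmem
    exact P.bot_notMem (L.inf_phibar i x ▸ P.inf_mem hmem h)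
  · intro h
    have hsum : L.phi i x ⊔ L.phibar i x ∈ P.carrier := by
      rw [L.sup_phibar]; exact P.top_mem
    exact (P.prime hsum).resolve_left h

section Aux2

variable [Fintype I] [DecidableEq I]

/-- The Boolean element `c(x,y) = ⋀_j ((φ_j x ⊓ φ_j y) ⊔ (φ̄_j x ⊓ φ̄_j y))`. -/
def LMAlg.cpair (L : LMAlg I A) (x y : A) : A :=
  Finset.univ.inf fun j => (L.phi j x ⊓ L.phi j y) ⊔ (L.phibar j x ⊓ L.phibar j y)

lemma LMAlg.phi_cpair (L : LMAlg I A) (j : I) (x y : A) :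
    L.phi j (L.cpair x y) = L.cpair x y := by
  rw [LMAlg.cpair, L.phi_finsetInf]
  congr 1
  funext i
  rw [L.phi_sup, L.phi_inf, L.phi_inf, L.phi_phi, L.phi_phi, L.phi_phibar, L.phi_phibar]

lemma LMAlg.cpair_le (L : LMAlg I A) (x y : A) (j : I) :
    L.cpair x y ≤ (L.phi j x ⊓ L.phi j y) ⊔ (L.phibar j x ⊓ L.phibar j y) :=
  Finset.inf_le (Finset.mem_univ j)

lemma lat_helper {p q p' q' c : A} (hc : c ≤ (p ⊓ q) ⊔ (p' ⊓ q')) (hpp : p ⊓ p' = ⊥) :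
    p ⊓ c ≤ q := by
  calc p ⊓ c ≤ p ⊓ ((p ⊓ q) ⊔ (p' ⊓ q')) := inf_le_inf_left _ hc
  _ = (p ⊓ (p ⊓ q)) ⊔ (p ⊓ (p' ⊓ q')) := inf_sup_left _ _ _
  _ = (p ⊓ (p ⊓ q)) ⊔ ⊥ := by rw [← inf_assoc p p' q', hpp, bot_inf_eq]
  _ ≤ q := by rw [sup_bot_eq]; exact inf_le_of_right_le inf_le_right

lemma LMAlg.inf_cpair (L : LMAlg I A) (x y : A) :
    x ⊓ L.cpair x y = y ⊓ L.cpair x y := by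
  apply L.determined
  intro j
  rw [L.phi_inf, L.phi_inf, L.phi_cpair]
  have h1 : L.phi j x ⊓ L.cpair x y ≤ L.phi j y :=
    lat_helper (L.cpair_le x y j) (L.inf_phibar j x)
  have h2 : L.phi j y ⊓ L.cpair x y ≤ L.phi j x := by
    refine lat_helper (q := L.phi j x) (p' := L.phibar j y) (q' := L.phibar j x)
      ?_ (L.inf_phibar j y)
    calc L.cpair x y ≤ (L.phi j x ⊓ L.phi j y) ⊔ (L.phibar j x ⊓ L.phibar j y) :=
        L.cpair_le x y j
    _ = (L.phi j y ⊓ L.phi j x) ⊔ (L.phibar j y ⊓ L.phibar j x) := by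
        rw [inf_comm (L.phi j x), inf_comm (L.phibar j x)]
  exact le_antisymm (le_inf h1 inf_le_right) (le_inf h2 inf_le_right)

end Aux2
section Aux3

/-- The congruence determined by a subset `Y` of the dual space. -/
def thetaM (Y : Set (PrimeFilter A)) : A → A → Prop :=
  fun a b => sigmaA a ∩ Y = sigmaA b ∩ Y

/-- The set of prime filters saturated with respect to a relation `r`. -/
def satSet (r : A → A → Prop) : Set (PrimeFilter A) :=
  {P | ∀ a b, r a b → (a ∈ P.carrier ↔ b ∈ P.carrier)}

lemma thetaM_iff {Y : Set (PrimeFilter A)} {a b : A} :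
    thetaM Y a b ↔ ∀ P ∈ Y, (a ∈ P.carrier ↔ b ∈ P.carrier) := by
  constructor
  · intro h P hP
    constructor
    · intro ha
      have h' : P ∈ sigmaA a ∩ Y := ⟨ha, hP⟩
      rw [h] at h'
      exact h'.1
    · intro hb
      have h' : P ∈ sigmaA b ∩ Y := ⟨hb, hP⟩
      rw [← h] at h'
      exact h'.1
  · intro h
    ext P
    constructor
    · rintro ⟨h1, h2⟩; exact ⟨(h P h2).mp h1, h2⟩
    · rintro ⟨h1, h2⟩; exact ⟨(h P h2).mpr h1, h2⟩

lemma mem_sup_iff {P : PrimeFilter A} {a b : A} :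
    a ⊔ b ∈ P.carrier ↔ a ∈ P.carrier ∨ b ∈ P.carrier := by
  constructor
  · exact fun h => P.prime h
  · rintro (h | h)
    · exact P.mem_of_le h le_sup_left
    · exact P.mem_of_le h le_sup_right

lemma mem_inf_iff {P : PrimeFilter A} {a b : A} :
    a ⊓ b ∈ P.carrier ↔ a ∈ P.carrier ∧ b ∈ P.carrier := by
  constructor
  · intro h; exact ⟨P.mem_of_le h inf_le_left, P.mem_of_le h inf_le_right⟩
  · rintro ⟨h1, h2⟩; exact P.inf_mem h1 h2

lemma thetaM_isLMCongr (L : LMAlg I A) {Y : Set (PrimeFilter A)}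
    (hY : Modal L.fA Y) : IsLMCongr L (thetaM Y) := by
  have mem_iff : ∀ (i : I) (P : PrimeFilter A), P ∈ Y ↔ L.fA i P ∈ Y := by
    intro i P
    conv_lhs => rw [← hY i]
    exact Iff.rfl
  have hphi : ∀ (i : I) {x y : A}, thetaM Y x y → thetaM Y (L.phi i x) (L.phi i y) := by
    intro i x y h
    rw [thetaM_iff] at h ⊢
    intro P hP
    have hfA : L.fA i P ∈ Y := (mem_iff i P).mp hP
    exact h (L.fA i P) hfA
  refine ⟨fun x => rfl, Eq.symm, Eq.trans, ?_, ?_, hphi, ?_⟩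
  · intro x y u v h1 h2
    rw [thetaM_iff] at h1 h2 ⊢
    intro P hP
    rw [mem_sup_iff, mem_sup_iff, h1 P hP, h2 P hP]
  · intro x y u v h1 h2
    rw [thetaM_iff] at h1 h2 ⊢
    intro P hP
    rw [mem_inf_iff, mem_inf_iff, h1 P hP, h2 P hP]
  · intro i x y h
    have h' := hphi i h
    rw [thetaM_iff] at h' ⊢
    intro P hP
    rw [phibar_mem_iff, phibar_mem_iff, h' P hP]

lemma isOpen_sigmaA (a : A) : IsOpen (sigmaA a) :=
  TopologicalSpace.GenerateOpen.basic _ (Or.inl ⟨a, rfl⟩)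

lemma isClosed_sigmaA (a : A) : IsClosed (sigmaA a) :=
  ⟨TopologicalSpace.GenerateOpen.basic _ (Or.inr ⟨a, rfl⟩)⟩

lemma satSet_closed (r : A → A → Prop) : IsClosed (satSet (A := A) r) := by
  have he : satSet (A := A) r = ⋂ (a : A), ⋂ (b : A), ⋂ (_ : r a b),
      ((sigmaA a ∩ sigmaA b) ∪ ((sigmaA a)ᶜ ∩ (sigmaA b)ᶜ)) := by
    ext P
    simp only [satSet, Set.mem_iInter, Set.mem_setOf_eq, Set.mem_union, Set.mem_inter_iff,
      Set.mem_compl_iff, sigmaA]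
    constructor
    · intro h a b hab
      have := h a b hab
      tauto
    · intro h a b hab
      have := h a b hab
      tauto
  rw [he]
  exact isClosed_iInter fun a => isClosed_iInter fun b => isClosed_iInter fun _ =>
    ((isClosed_sigmaA a).inter (isClosed_sigmaA b)).union
      (((isOpen_sigmaA a).isClosed_compl).inter ((isOpen_sigmaA b).isClosed_compl))

lemma satSet_modal [Fintype I] [DecidableEq I] {L : LMAlg I A} {r : A → A → Prop}
    (hr : IsLMCongr L r) : Modal L.fA (satSet r) := by
  intro i
  ext P
  simp only [Set.mem_preimage]
  constructor
  · intro h a b hab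
    have hphis : ∀ j, (L.phi j a ∈ P.carrier ↔ L.phi j b ∈ P.carrier) := by
      intro j
      have h' := h (L.phi j a) (L.phi j b) (hr.phi_congr j hab)
      simpa only [LMAlg.fA, Set.mem_preimage, L.phi_phi] using h'
    have hc : L.cpair a b ∈ P.carrier := by
      refine finsetInf_mem _ _ ?_
      intro j _
      by_cases hj : L.phi j a ∈ P.carrier
      · exact P.mem_of_le (P.inf_mem hj ((hphis j).mp hj)) le_sup_left
      · have hb' : L.phi j b ∉ P.carrier := fun h' => hj ((hphis j).mpr h')
        exact P.mem_of_le
          (P.inf_mem ((phibar_mem_iff L j a P).mpr hj) ((phibar_mem_iff L j b P).mpr hb'))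
          le_sup_right
    constructor
    · intro ha
      have h' : a ⊓ L.cpair a b ∈ P.carrier := P.inf_mem ha hc
      rw [L.inf_cpair] at h'
      exact P.mem_of_le h' inf_le_left
    · intro hb
      have h' : b ⊓ L.cpair a b ∈ P.carrier := P.inf_mem hb hc
      rw [← L.inf_cpair] at h'
      exact P.mem_of_le h' inf_le_left
  · intro h a b hab
    exact h (L.phi i a) (L.phi i b) (hr.phi_congr i hab)

end Aux3
section Aux4

lemma zornSep {L : LMAlg I A} {r : A → A → Prop} (hr : IsLMCongr L r)
    {u v : A} (huv : u ≤ v) (hnr : ¬ r u v) :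
    ∃ P : PrimeFilter A, (∀ x y, r x y → (x ∈ P.carrier ↔ y ∈ P.carrier)) ∧
      v ∈ P.carrier ∧ u ∉ P.carrier := by
  set S : Set (Set A) := {F | ⊤ ∈ F ∧ (∀ x ∈ F, ∀ y, x ≤ y → y ∈ F) ∧
      (∀ x ∈ F, ∀ y ∈ F, x ⊓ y ∈ F) ∧ (∀ x y, r x y → x ∈ F → y ∈ F) ∧ v ∈ F ∧ u ∉ F}
    with hSdef
  have hF0 : {x | r (v ⊓ x) v} ∈ S := by
    refine ⟨?_, ?_, ?_, ?_, ?_, ?_⟩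
    · show r (v ⊓ ⊤) v
      simpa using hr.refl v
    · intro x hx y hxy
      show r (v ⊓ y) v
      have h1 : r ((v ⊓ x) ⊓ (v ⊓ y)) (v ⊓ (v ⊓ y)) := hr.inf_congr hx (hr.refl (v ⊓ y))
      have e1 : (v ⊓ x) ⊓ (v ⊓ y) = v ⊓ x := inf_eq_left.mpr (inf_le_inf_left v hxy)
      have e2 : v ⊓ (v ⊓ y) = v ⊓ y := by rw [← inf_assoc, inf_idem]
      rw [e1, e2] at h1
      exact hr.trans (hr.symm h1) hx
    · intro x hx y hy
      show r (v ⊓ (x ⊓ y)) v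
      have h1 := hr.inf_congr hx hy
      rw [← inf_inf_distrib_left, inf_idem] at h1
      exact h1
    · intro x y hxy hx
      exact hr.trans (hr.symm (hr.inf_congr (hr.refl v) hxy)) hx
    · show r (v ⊓ v) v
      simpa using hr.refl v
    · intro hu'
      have : r u v := by simpa [inf_eq_right.mpr huv] using hu'
      exact hnr this
  have hchains : ∀ c ⊆ S, IsChain (· ⊆ ·) c → c.Nonempty →
      ∃ ub ∈ S, ∀ s ∈ c, s ⊆ ub := by
    intro c hcS hchain hcne
    refine ⟨⋃₀ c, ⟨?_, ?_, ?_, ?_, ?_, ?_⟩, fun s hs => Set.subset_sUnion_of_mem hs⟩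
    · obtain ⟨F, hF⟩ := hcne; exact ⟨F, hF, (hcS hF).1⟩
    · rintro x ⟨F, hF, hx⟩ y hxy; exact ⟨F, hF, (hcS hF).2.1 x hx y hxy⟩
    · rintro x ⟨F, hF, hx⟩ y ⟨G, hG, hy⟩
      rcases hchain.total hF hG with h | h
      · exact ⟨G, hG, (hcS hG).2.2.1 x (h hx) y hy⟩
      · exact ⟨F, hF, (hcS hF).2.2.1 x hx y (h hy)⟩
    · rintro x y hxy ⟨F, hF, hx⟩; exact ⟨F, hF, (hcS hF).2.2.2.1 x y hxy hx⟩
    · obtain ⟨F, hF⟩ := hcne; exact ⟨F, hF, (hcS hF).2.2.2.2.1⟩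
    · rintro ⟨F, hF, hx⟩; exact (hcS hF).2.2.2.2.2 hx
  obtain ⟨M, _, hM⟩ := zorn_subset_nonempty S hchains _ hF0
  obtain ⟨htop, hup, hinf, hsat, hv, hu⟩ := hM.1
  have hprime : ∀ x y : A, x ⊔ y ∈ M → x ∈ M ∨ y ∈ M := by
    by_contra hcon
    push_neg at hcon
    obtain ⟨x, y, hxy, hx, hy⟩ := hcon
    have key : ∀ z : A, z ∉ M → ∃ m ∈ M, r (m ⊓ (z ⊓ u)) (m ⊓ z) := by
      intro z hz
      set E : Set A := {w | ∃ m ∈ M, r (m ⊓ (z ⊓ w)) (m ⊓ z)} with hEdef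
      have hME : M ⊆ E := by
        intro m hm
        refine ⟨m, hm, ?_⟩
        have e : m ⊓ (z ⊓ m) = m ⊓ z := by
          rw [inf_comm z m, ← inf_assoc, inf_idem]
        rw [e]
        exact hr.refl _
      have hzE : z ∈ E := by
        refine ⟨⊤, htop, ?_⟩
        simpa [inf_idem] using hr.refl z
      by_contra hu2
      have hES : E ∈ S := by
        refine ⟨hME htop, ?_, ?_, ?_, hME hv, hu2⟩
        · rintro w ⟨m, hm, hw⟩ w' hww'
          refine ⟨m, hm, ?_⟩
          have h1 : r ((m ⊓ (z ⊓ w)) ⊓ (m ⊓ (z ⊓ w'))) ((m ⊓ z) ⊓ (m ⊓ (z ⊓ w'))) :=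
            hr.inf_congr hw (hr.refl _)
          have e1 : (m ⊓ (z ⊓ w)) ⊓ (m ⊓ (z ⊓ w')) = m ⊓ (z ⊓ w) :=
            inf_eq_left.mpr (inf_le_inf_left m (inf_le_inf_left z hww'))
          have e2 : (m ⊓ z) ⊓ (m ⊓ (z ⊓ w')) = m ⊓ (z ⊓ w') :=
            inf_eq_right.mpr (inf_le_inf_left m inf_le_left)
          rw [e1, e2] at h1
          exact hr.trans (hr.symm h1) hw
        · rintro w ⟨m1, hm1, hw1⟩ w' ⟨m2, hm2, hw2⟩
          refine ⟨m2 ⊓ m1, hinf m2 hm2 m1 hm1, ?_⟩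
          have la : r ((m2 ⊓ m1) ⊓ (z ⊓ w)) ((m2 ⊓ m1) ⊓ z) := by
            have h' := hr.inf_congr (hr.refl m2) hw1
            have e1 : m2 ⊓ (m1 ⊓ (z ⊓ w)) = (m2 ⊓ m1) ⊓ (z ⊓ w) := (inf_assoc _ _ _).symm
            have e2 : m2 ⊓ (m1 ⊓ z) = (m2 ⊓ m1) ⊓ z := (inf_assoc _ _ _).symm
            rwa [e1, e2] at h'
          have lb : r ((m2 ⊓ m1) ⊓ (z ⊓ w')) ((m2 ⊓ m1) ⊓ z) := by
            have h' := hr.inf_congr (hr.refl m1) hw2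
            have e1 : m1 ⊓ (m2 ⊓ (z ⊓ w')) = (m2 ⊓ m1) ⊓ (z ⊓ w') := by
              rw [← inf_assoc, inf_comm m1 m2]
            have e2 : m1 ⊓ (m2 ⊓ z) = (m2 ⊓ m1) ⊓ z := by
              rw [← inf_assoc, inf_comm m1 m2]
            rwa [e1, e2] at h'
          have h1 := hr.inf_congr la lb
          have e3 : ((m2 ⊓ m1) ⊓ (z ⊓ w)) ⊓ ((m2 ⊓ m1) ⊓ (z ⊓ w'))
              = (m2 ⊓ m1) ⊓ (z ⊓ (w ⊓ w')) := by
            rw [← inf_inf_distrib_left, ← inf_inf_distrib_left]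
          have e4 : ((m2 ⊓ m1) ⊓ z) ⊓ ((m2 ⊓ m1) ⊓ z) = (m2 ⊓ m1) ⊓ z := inf_idem _
          rwa [e3, e4] at h1
        · rintro w w' hww' ⟨m, hm, hw⟩
          refine ⟨m, hm, ?_⟩
          have h1 : r (m ⊓ (z ⊓ w)) (m ⊓ (z ⊓ w')) :=
            hr.inf_congr (hr.refl m) (hr.inf_congr (hr.refl z) hww')
          exact hr.trans (hr.symm h1) hw
      exact hz (hM.2 hES hME hzE)
    obtain ⟨m1, hm1, h1⟩ := key x hx
    obtain ⟨m2, hm2, h2⟩ := key y hy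
    have h1' : r ((m2 ⊓ m1) ⊓ (x ⊓ u)) ((m2 ⊓ m1) ⊓ x) := by
      have h' := hr.inf_congr (hr.refl m2) h1
      have e1 : m2 ⊓ (m1 ⊓ (x ⊓ u)) = (m2 ⊓ m1) ⊓ (x ⊓ u) := (inf_assoc _ _ _).symm
      have e2 : m2 ⊓ (m1 ⊓ x) = (m2 ⊓ m1) ⊓ x := (inf_assoc _ _ _).symm
      rwa [e1, e2] at h'
    have h2' : r ((m2 ⊓ m1) ⊓ (y ⊓ u)) ((m2 ⊓ m1) ⊓ y) := by
      have h' := hr.inf_congr (hr.refl m1) h2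
      have e1 : m1 ⊓ (m2 ⊓ (y ⊓ u)) = (m2 ⊓ m1) ⊓ (y ⊓ u) := by
        rw [← inf_assoc, inf_comm m1 m2]
      have e2 : m1 ⊓ (m2 ⊓ y) = (m2 ⊓ m1) ⊓ y := by
        rw [← inf_assoc, inf_comm m1 m2]
      rwa [e1, e2] at h'
    have h3 := hr.sup_congr h1' h2'
    have e5 : ((m2 ⊓ m1) ⊓ (x ⊓ u)) ⊔ ((m2 ⊓ m1) ⊓ (y ⊓ u))
        = (m2 ⊓ m1) ⊓ ((x ⊔ y) ⊓ u) := by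
      rw [← inf_sup_left, ← inf_sup_right]
    have e6 : ((m2 ⊓ m1) ⊓ x) ⊔ ((m2 ⊓ m1) ⊓ y) = (m2 ⊓ m1) ⊓ (x ⊔ y) :=
      (inf_sup_left _ _ _).symm
    rw [e5, e6] at h3
    have hR : (m2 ⊓ m1) ⊓ (x ⊔ y) ∈ M := hinf _ (hinf m2 hm2 m1 hm1) _ hxy
    have hL := hsat _ _ (hr.symm h3) hR
    exact hu (hup _ hL u (le_trans inf_le_right inf_le_right))
  have hbot : (⊥ : A) ∉ M := fun hb => hu (hup ⊥ hb u bot_le)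
  refine ⟨⟨M, htop, hbot, fun ha hab => hup _ ha _ hab, fun ha hb => hinf _ ha _ hb,
    fun h => hprime _ _ h⟩, ?_, hv, hu⟩
  intro x y hxy
  exact ⟨hsat x y hxy, hsat y x (hr.symm hxy)⟩

end Aux4
section Aux5

lemma thetaM_satSet {L : LMAlg I A} {r : A → A → Prop} (hr : IsLMCongr L r) :
    thetaM (satSet (A := A) r) = r := by
  funext a b
  apply propext
  constructor
  · intro h
    by_contra hnr
    have hnr' : ¬ r (a ⊓ b) (a ⊔ b) := by
      intro h'
      have h1 : r a (a ⊔ b) := by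
        have h'' := hr.sup_congr h' (hr.refl a)
        rwa [sup_eq_right.mpr inf_le_left, sup_eq_left.mpr le_sup_left] at h''
      have h2 : r b (a ⊔ b) := by
        have h'' := hr.sup_congr h' (hr.refl b)
        rwa [sup_eq_right.mpr inf_le_right, sup_eq_left.mpr le_sup_right] at h''
      exact hnr (hr.trans h1 (hr.symm h2))
    obtain ⟨P, hsat, hv, hu⟩ := zornSep hr inf_le_sup hnr'
    have hPmem : P ∈ satSet (A := A) r := fun x y hxy => hsat x y hxy
    have hab : a ∈ P.carrier ↔ b ∈ P.carrier := thetaM_iff.mp h P hPmem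
    rcases P.prime hv with ha | hb
    · exact hu (P.inf_mem ha (hab.mp ha))
    · exact hu (P.inf_mem (hab.mpr hb) hb)
  · intro hab
    rw [thetaM_iff]
    intro P hP
    exact hP a b hab

lemma open_sep {U : Set (PrimeFilter A)} (hU : IsOpen U) :
    ∀ P, P ∈ U → ∃ a b : A, a ∈ P.carrier ∧ b ∉ P.carrier ∧ sigmaA a ∩ (sigmaA b)ᶜ ⊆ U := by
  have hU' : TopologicalSpace.GenerateOpen
      (Set.range (sigmaA (A := A)) ∪ Set.range (fun a : A => (sigmaA a)ᶜ)) U := hU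
  clear hU
  induction hU' with
  | basic s hs =>
    intro P hP
    rcases hs with ⟨a, rfl⟩ | ⟨b, rfl⟩
    · refine ⟨a, ⊥, hP, P.bot_notMem, ?_⟩
      rw [sigmaA_bot]
      simp
    · refine ⟨⊤, b, P.top_mem, hP, ?_⟩
      rw [sigmaA_top]
      simp
  | univ => exact fun P _ => ⟨⊤, ⊥, P.top_mem, P.bot_notMem, Set.subset_univ _⟩
  | inter s t _ _ ihs iht =>
    intro P hP
    obtain ⟨a1, b1, ha1, hb1, hsub1⟩ := ihs P hP.1
    obtain ⟨a2, b2, ha2, hb2, hsub2⟩ := iht P hP.2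
    refine ⟨a1 ⊓ a2, b1 ⊔ b2, P.inf_mem ha1 ha2, ?_, ?_⟩
    · intro h
      rcases P.prime h with h | h
      exacts [hb1 h, hb2 h]
    · rw [sigmaA_inf, sigmaA_sup, Set.compl_union]
      rintro Q ⟨⟨hQ1, hQ2⟩, hQ3, hQ4⟩
      exact ⟨hsub1 ⟨hQ1, hQ3⟩, hsub2 ⟨hQ2, hQ4⟩⟩
  | sUnion ts _ ih =>
    rintro P ⟨t, ht, hPt⟩
    obtain ⟨a, b, ha, hb, hsub⟩ := ih t ht P hPt
    exact ⟨a, b, ha, hb, hsub.trans (Set.subset_sUnion_of_mem ht)⟩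

lemma satSet_thetaM {Y : Set (PrimeFilter A)} (hY : IsClosed Y) :
    satSet (thetaM Y) = Y := by
  apply Set.Subset.antisymm
  · intro P hP
    by_contra hPY
    obtain ⟨a, b, ha, hb, hsub⟩ := open_sep hY.isOpen_compl P hPY
    have hθ : thetaM Y a (a ⊓ b) := by
      show sigmaA a ∩ Y = sigmaA (a ⊓ b) ∩ Y
      rw [sigmaA_inf]
      ext Q
      constructor
      · rintro ⟨hQa, hQY⟩
        have hQb : Q ∈ sigmaA b := by
          by_contra hQb
          exact (hsub ⟨hQa, hQb⟩) hQY
        exact ⟨⟨hQa, hQb⟩, hQY⟩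
      · rintro ⟨⟨hQa, _⟩, hQY⟩
        exact ⟨hQa, hQY⟩
    have h' := (hP a (a ⊓ b) hθ).mp ha
    exact hb (P.mem_of_le h' inf_le_right)
  · intro P hPY a b hab
    exact thetaM_iff.mp hab P hPY

lemma thetaM_antitone {Y Y' : Set (PrimeFilter A)} (h : Y ⊆ Y') :
    ∀ a b : A, thetaM Y' a b → thetaM Y a b := by
  intro a b hab
  rw [thetaM_iff] at hab ⊢
  intro P hP
  exact hab P (h hP)

lemma satSet_antitone {r r' : A → A → Prop} (h : ∀ a b, r a b → r' a b) :
    satSet (A := A) r' ⊆ satSet r := fun P hP a b hab => hP a b (h a b hab)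

lemma Modal.compl {J X : Type*} {f : J → X → X} {Y : Set X} (h : Modal f Y) :
    Modal f Yᶜ := fun i => by rw [Set.preimage_compl, h i]

lemma symmDiff_key (G : Set (PrimeFilter A)) :
    (fun a b : A => symmDiff (sigmaA a) (sigmaA b) ⊆ G) = thetaM Gᶜ := by
  funext a b
  apply propext
  constructor
  · intro h
    show sigmaA a ∩ Gᶜ = sigmaA b ∩ Gᶜ
    ext Q
    constructor
    · rintro ⟨ha, hG⟩
      refine ⟨?_, hG⟩
      by_contra hb
      exact hG (h (Set.mem_symmDiff.mpr (Or.inl ⟨ha, hb⟩)))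
    · rintro ⟨hb, hG⟩
      refine ⟨?_, hG⟩
      by_contra ha
      exact hG (h (Set.mem_symmDiff.mpr (Or.inr ⟨hb, ha⟩)))
  · intro h Q hQ
    have h' := Set.ext_iff.mp h Q
    rcases Set.mem_symmDiff.mp hQ with ⟨ha, hb⟩ | ⟨hb, ha⟩
    · by_contra hG
      exact hb (h'.mp ⟨ha, hG⟩).1
    · by_contra hG
      exact ha (h'.mpr ⟨hb, hG⟩).1

end Aux5

end Auxiliary
lemma rel_le_iff {r s : A → A → Prop} : r ≤ s ↔ ∀ a b, r a b → s a b := Iff.rfl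
/-- for an LM_n-algebra `A`: (i) closed modal subsets of `X(A)` are
dually isomorphic (via `Θ_M`) to the lattice of LM_n-congruences; (ii) open modal
subsets of `X(A)` are isomorphic (via `Θ_OM`) to the lattice of LM_n-congruences. -/
theorem stmt8 {A : Type*} [DistribLattice A] [BoundedOrder A] (n : ℕ) (hn : 2 ≤ n)
    (L : LMAlg (Fin (n - 1)) A) :
    (∃ e : {Y : Set (PrimeFilter A) // IsClosed Y ∧ Modal L.fA Y} ≃o
           ({r : A → A → Prop // IsLMCongr L r})ᵒᵈ,
       ∀ Y, (OrderDual.ofDual (e Y)).val =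
         fun a b => sigmaA a ∩ Y.val = sigmaA b ∩ Y.val) ∧
    (∃ e : {G : Set (PrimeFilter A) // IsOpen G ∧ Modal L.fA G} ≃o
           {r : A → A → Prop // IsLMCongr L r},
       ∀ G, (e G).val = fun a b => symmDiff (sigmaA a) (sigmaA b) ⊆ G.val) := by
  constructor
  · refine ⟨⟨⟨fun Y => OrderDual.toDual ⟨thetaM Y.1, thetaM_isLMCongr L Y.2.2⟩,
      fun r => ⟨satSet (OrderDual.ofDual r).1, satSet_closed _,
        satSet_modal (OrderDual.ofDual r).2⟩, ?_, ?_⟩, ?_⟩, fun Y => rfl⟩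
    · intro Y
      exact Subtype.ext (satSet_thetaM Y.2.1)
    · intro r
      exact Subtype.ext (thetaM_satSet (OrderDual.ofDual r).2)
    · intro Y Y'
      show OrderDual.toDual (⟨thetaM Y.1, _⟩ : {r : A → A → Prop // IsLMCongr L r}) ≤
        OrderDual.toDual (⟨thetaM Y'.1, _⟩ : {r : A → A → Prop // IsLMCongr L r}) ↔ Y ≤ Y'
      rw [OrderDual.toDual_le_toDual, Subtype.mk_le_mk, rel_le_iff]
      constructor
      · intro h
        show Y.1 ⊆ Y'.1
        calc Y.1 = satSet (thetaM Y.1) := (satSet_thetaM Y.2.1).symm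
        _ ⊆ satSet (thetaM Y'.1) := satSet_antitone h
        _ = Y'.1 := satSet_thetaM Y'.2.1
      · intro h a b hab
        exact thetaM_antitone h a b hab
  · refine ⟨⟨⟨fun G => ⟨fun a b => symmDiff (sigmaA a) (sigmaA b) ⊆ G.1,
        by rw [symmDiff_key]; exact thetaM_isLMCongr L G.2.2.compl⟩,
      fun r => ⟨(satSet r.1)ᶜ, (satSet_closed r.1).isOpen_compl,
        (satSet_modal r.2).compl⟩, ?_, ?_⟩, ?_⟩, fun G => rfl⟩
    · intro G
      apply Subtype.ext
      show (satSet (fun a b => symmDiff (sigmaA a) (sigmaA b) ⊆ G.1))ᶜ = G.1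
      rw [symmDiff_key, satSet_thetaM G.2.1.isClosed_compl, compl_compl]
    · intro r
      apply Subtype.ext
      show (fun a b => symmDiff (sigmaA a) (sigmaA b) ⊆ (satSet r.1)ᶜ) = r.1
      rw [symmDiff_key, compl_compl, thetaM_satSet r.2]
    · intro G G'
      simp only [Equiv.coe_fn_mk]
      rw [Subtype.mk_le_mk, symmDiff_key G.1, symmDiff_key G'.1, rel_le_iff]
      constructor
      · intro h
        show G.1 ⊆ G'.1
        rw [← Set.compl_subset_compl]
        calc G'.1ᶜ = satSet (thetaM G'.1ᶜ) := (satSet_thetaM G'.2.1.isClosed_compl).symm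
        _ ⊆ satSet (thetaM G.1ᶜ) := satSet_antitone h
        _ = G.1ᶜ := satSet_thetaM G.2.1.isClosed_compl
      · intro h
        exact thetaM_antitone (Set.compl_subset_compl.mpr h)
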